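/- Over any field, the polynomial f = ∏_{i=1}^n (x_i^d − 1) has exactly 2^n monomials, and its factor g = ∏_{i=1}^n (1 + x_i + ⋯ + x_i^{d−1}) has exactly d^n monomials. In particular, g divides f and ‖g‖ = ‖f‖^{log₂ d}. -/

import Mathlib

open MvPolynomial

private lemma prod_pow_eq_monomial' {F : Type*} [Field F] {n : ℕ} (p : Fin n → ℕ) :
    (∏ i : Fin n, (X i) ^ p i : MvPolynomial (Fin n) F)
      = monomial (Finsupp.equivFunOnFinite.symm p) 1 := by
  classical
  set q : Fin n →₀ ℕ := Finsupp.equivFunOnFinite.symm p with hq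
  have hqa : ∀ i, q i = p i := fun i => rfl
  rw [← MvPolynomial.prod_X_pow_eq_monomial (s := q)]
  refine Eq.trans ?_ (Finset.prod_subset (Finset.subset_univ q.support)
    (fun x _ hx => by rw [Finsupp.notMem_support_iff.mp hx, pow_zero])).symm
  exact Finset.prod_congr rfl fun x _ => by rw [hqa]

private lemma card_support_sum_monomial {ι F : Type*} [Field F] {n : ℕ} (s : Finset ι)
    (e : ι → (Fin n →₀ ℕ)) (c : ι → F) (he : Function.Injective e) (hc : ∀ i, c i ≠ 0) :
    (∑ i ∈ s, (monomial (e i) (c i) : MvPolynomial (Fin n) F)).support.card = s.card := by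
  classical
  have hsupp : ∀ i, (monomial (e i) (c i) : MvPolynomial (Fin n) F).support = {e i} := by
    intro i
    rw [MvPolynomial.support_monomial]
    simp [hc i]
  have hdisj : ∀ i₁ i₂ : ι, i₁ ≠ i₂ →
      Disjoint (monomial (e i₁) (c i₁) : MvPolynomial (Fin n) F).support
        (monomial (e i₂) (c i₂) : MvPolynomial (Fin n) F).support := by
    intro i₁ i₂ h
    rw [hsupp, hsupp]
    simp only [Finset.disjoint_singleton]
    exact fun h' => h (he h')
  have : (∑ i ∈ s, (monomial (e i) (c i) : MvPolynomial (Fin n) F)).support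
      = s.biUnion fun i => (monomial (e i) (c i) : MvPolynomial (Fin n) F).support :=
    by have h := Finsupp.support_sum_eq_biUnion s hdisj; rwa [← AddMonoidAlgebra.coeff_sum] at h
  rw [this, Finset.card_biUnion (fun i _ j _ hij => hdisj i j hij)]
  simp [hsupp]

/-- Over any field, `f = ∏ᵢ (xᵢ^d − 1)` has `2^n` monomials while its factor
`g = ∏ᵢ (1 + xᵢ + ⋯ + xᵢ^{d−1})` has `d^n` monomials; in particular `g ∣ f` and
`‖g‖ = ‖f‖^{log₂ d}`. -/
theorem sparse_with_dense_factor {F : Type*} [Field F] (n d : ℕ) (hd : 1 ≤ d) :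
    (∏ i : Fin n, ((X i) ^ d - 1) : MvPolynomial (Fin n) F).support.card = 2 ^ n ∧
    (∏ i : Fin n, ∑ j ∈ Finset.range d, (X i) ^ j
        : MvPolynomial (Fin n) F).support.card = d ^ n ∧
    (∏ i : Fin n, ∑ j ∈ Finset.range d, (X i) ^ j : MvPolynomial (Fin n) F)
      ∣ ∏ i : Fin n, ((X i) ^ d - 1) ∧
    ((d : ℝ) ^ n : ℝ) = ((2 : ℝ) ^ n : ℝ) ^ (Real.logb 2 (d : ℝ)) := by
  classical
  have hd0 : d ≠ 0 := by omega
  refine ⟨?_, ?_, ?_, ?_⟩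
  · -- support of f has 2^n elements
    have expand : (∏ i : Fin n, ((X i) ^ d - 1) : MvPolynomial (Fin n) F)
        = ∑ t ∈ (Finset.univ : Finset (Fin n)).powerset,
            monomial (Finsupp.equivFunOnFinite.symm fun i => if i ∈ t then d else 0)
              ((-1 : F) ^ (Finset.univ \ t).card) := by
      have : (∏ i : Fin n, ((X i) ^ d - 1) : MvPolynomial (Fin n) F)
          = ∏ i : Fin n, ((X i) ^ d + (-1)) := Finset.prod_congr rfl fun i _ => by ring
      rw [this, Finset.prod_add]
      refine Finset.sum_congr rfl fun t ht => ?_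
      have h1 : (∏ i ∈ t, (X i) ^ d : MvPolynomial (Fin n) F)
          = ∏ i : Fin n, (X i) ^ (if i ∈ t then d else 0) := by
        refine Finset.prod_subset (Finset.subset_univ t) ?_ |>.symm.trans ?_ |>.symm
        · intro x _ hx; simp [hx]
        · exact Finset.prod_congr rfl fun x hx => by simp [hx]
      rw [h1, prod_pow_eq_monomial', Finset.prod_const]
      have : ((-1 : MvPolynomial (Fin n) F)) ^ (Finset.univ \ t).card
          = C ((-1 : F) ^ (Finset.univ \ t).card) := by
        rw [map_pow, map_neg, map_one]
      rw [this, mul_comm, C_mul_monomial, mul_one]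
    rw [expand, card_support_sum_monomial _ _ _ ?_ (fun t => pow_ne_zero _ (neg_ne_zero.mpr one_ne_zero))]
    · simp
    · intro t₁ t₂ h
      have h' := Finsupp.equivFunOnFinite.symm.injective h
      ext x
      have := congrFun h' x
      constructor <;> intro hx <;> by_contra hx' <;> simp [hx, hx'] at this <;> omega
  · -- support of g has d^n elements
    have expand : (∏ i : Fin n, ∑ j ∈ Finset.range d, (X i) ^ j : MvPolynomial (Fin n) F)
        = ∑ p ∈ Fintype.piFinset (fun _ : Fin n => Finset.range d),
            monomial (Finsupp.equivFunOnFinite.symm p) (1 : F) := by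
      rw [Finset.prod_univ_sum]
      exact Finset.sum_congr rfl fun p _ => prod_pow_eq_monomial' p
    rw [expand, card_support_sum_monomial _ _ _
      (fun p q h => Finsupp.equivFunOnFinite.symm.injective h) (fun _ => one_ne_zero)]
    simp
  · -- divisibility
    refine ⟨∏ i : Fin n, ((X i) - 1), ?_⟩
    rw [← Finset.prod_mul_distrib]
    exact Finset.prod_congr rfl fun i _ => (geom_sum_mul (X i) d).symm
  · -- the real identity
    have hd0' : (0 : ℝ) < (d : ℝ) := by exact_mod_cast Nat.lt_of_lt_of_le Nat.zero_lt_one hd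
    rw [← Real.rpow_natCast (2 : ℝ) n, ← Real.rpow_natCast ((d : ℝ)) n,
      ← Real.rpow_mul (by norm_num), mul_comm, Real.rpow_mul (by norm_num),
      Real.rpow_logb two_pos (by norm_num) hd0']
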